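/- Let T_s > 0, Δ > 0, e_∞ > 0, a_l > 0, b_l > 0 and e₀ ∈ ℝ satisfy e₀ - Δ + e_∞ > 0. Set c_{3l} = 2/(exp(2b_l) - 1), and define K_{3l} : [0,∞) → ℝ by K_{3l}(t) = ((e₀ - Δ + e_∞)/c_{3l})·(coth(a_l·t/(T_s - t) + b_l) - 1) - e_∞ for t ∈ [0, T_s), and K_{3l}(t) = -e_∞ for t ≥ T_s. Then: (i) c_{3l} = coth(b_l) - 1, and consequently K_{3l}(0) = e₀ - Δ; (ii) K_{3l} is strictly decreasing on [0, T_s]; (iii) K_{3l}(t) → -e_∞ as t → T_s from the left, so K_{3l} is continuous on [0,∞) (properties of the novel performance function (27)). -/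

import Mathlib

open Real Filter

lemma coth_sub_one_eq {x : ℝ} (hx : 0 < x) :
    Real.cosh x / Real.sinh x - 1 = 2 / (Real.exp (2 * x) - 1) := by
  have hs : Real.sinh x ≠ 0 := ne_of_gt (Real.sinh_pos_iff.2 hx)
  have he : Real.exp (2 * x) - 1 ≠ 0 := by
    have : 1 < Real.exp (2 * x) := by
      rw [show (1:ℝ) = Real.exp 0 by simp]
      exact Real.exp_lt_exp.2 (by linarith)
    linarith
  rw [Real.cosh_eq, Real.sinh_eq, Real.exp_neg] at *
  have hex : Real.exp x ≠ 0 := (Real.exp_pos x).ne'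
  field_simp at *
  rw [show (2:ℝ) * x = x + x by ring, Real.exp_add] at *
  have he2 : Real.exp x ^ 2 - 1 ≠ 0 := by rw [sq]; exact he
  field_simp
  ring

theorem performance_function_coth_properties
    (Ts Δ einf al bl e₀ : ℝ)
    (hTs : 0 < Ts) (hΔ : 0 < Δ) (heinf : 0 < einf)
    (hal : 0 < al) (hbl : 0 < bl)
    (he₀ : 0 < e₀ - Δ + einf)
    (c3l : ℝ)
    (hc3l : c3l = 2 / (Real.exp (2 * bl) - 1))
    (K : ℝ → ℝ)
    (hK₁ : ∀ t, 0 ≤ t → t < Ts →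
      K t = ((e₀ - Δ + einf) / c3l) *
              (Real.cosh (al * t / (Ts - t) + bl) /
                Real.sinh (al * t / (Ts - t) + bl) - 1) - einf)
    (hK₂ : ∀ t, Ts ≤ t → K t = -einf) :
    c3l = Real.cosh bl / Real.sinh bl - 1 ∧
    K 0 = e₀ - Δ ∧
    StrictAntiOn K (Set.Icc 0 Ts) ∧
    Tendsto K (nhdsWithin Ts (Set.Iio Ts)) (nhds (-einf)) ∧
    ContinuousOn K (Set.Ici 0) := by
  have hexp1 : ∀ x : ℝ, 0 < x → 0 < Real.exp (2 * x) - 1 := by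
    intro x hx
    have : 1 < Real.exp (2 * x) := by
      rw [show (1:ℝ) = Real.exp 0 by simp]
      exact Real.exp_lt_exp.2 (by linarith)
    linarith
  have hc3lpos : 0 < c3l := by
    rw [hc3l]; exact div_pos two_pos (hexp1 bl hbl)
  set C := (e₀ - Δ + einf) / c3l with hC
  have hCpos : 0 < C := div_pos he₀ hc3lpos
  -- the inner argument
  set g : ℝ → ℝ := fun t => al * t / (Ts - t) + bl with hg
  have hgpos : ∀ t, 0 ≤ t → t < Ts → 0 < g t := by
    intro t ht htT
    have : 0 ≤ al * t / (Ts - t) := div_nonneg (by positivity) (by linarith)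
    simp only [hg]; linarith
  -- rewrite K via F
  have hKF : ∀ t, 0 ≤ t → t < Ts →
      K t = C * (2 / (Real.exp (2 * g t) - 1)) - einf := by
    intro t ht htT
    rw [hK₁ t ht htT, coth_sub_one_eq (hgpos t ht htT)]
  have hgmono : ∀ s t, 0 ≤ s → s < t → t < Ts → g s < g t := by
    intro s t hs hst htT
    have h1 : 0 < Ts - s := by linarith
    have h2 : 0 < Ts - t := by linarith
    have : al * s / (Ts - s) < al * t / (Ts - t) := by
      rw [div_lt_div_iff₀ h1 h2]
      nlinarith [mul_lt_mul_of_pos_left hst (mul_pos hal hTs)]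
    simpa [hg] using this
  -- F strictly decreasing composed
  have hFanti : ∀ x y : ℝ, 0 < x → x < y →
      2 / (Real.exp (2 * y) - 1) < 2 / (Real.exp (2 * x) - 1) := by
    intro x y hx hxy
    apply div_lt_div_of_pos_left two_pos (hexp1 x hx)
    have := Real.exp_lt_exp.2 (show 2 * x < 2 * y by linarith)
    linarith
  -- the left limit at Ts (proved first so it can be reused for continuity)
  have hlimit : Tendsto K (nhdsWithin Ts (Set.Iio Ts)) (nhds (-einf)) := by
    have hgtop : Tendsto g (nhdsWithin Ts (Set.Iio Ts)) atTop := by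
      have h1 : Tendsto (fun t => al * t) (nhdsWithin Ts (Set.Iio Ts)) (nhds (al * Ts)) :=
        (continuous_const.mul continuous_id).continuousAt.continuousWithinAt
      have h2 : Tendsto (fun t => (Ts - t)⁻¹) (nhdsWithin Ts (Set.Iio Ts)) atTop := by
        apply tendsto_inv_nhdsGT_zero.comp
        apply tendsto_nhdsWithin_of_tendsto_nhds_of_eventually_within
        · have : Tendsto (fun t : ℝ => Ts - t) (nhds Ts) (nhds (Ts - Ts)) :=
            (continuous_const.sub continuous_id).continuousAt
          simpa using this.mono_left nhdsWithin_le_nhds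
        · filter_upwards [self_mem_nhdsWithin] with t ht
          simp only [Set.mem_Iio] at ht
          simp only [Set.mem_Ioi]; linarith
      have h3 : Tendsto (fun t => al * t * (Ts - t)⁻¹) (nhdsWithin Ts (Set.Iio Ts)) atTop :=
        h1.pos_mul_atTop (by positivity) h2
      have h4 : Tendsto (fun t => al * t / (Ts - t) + bl) (nhdsWithin Ts (Set.Iio Ts)) atTop := by
        simp only [div_eq_mul_inv]
        exact tendsto_atTop_add_const_right _ bl h3
      exact h4
    have hFzero : Tendsto (fun x : ℝ => 2 / (Real.exp (2 * x) - 1)) atTop (nhds 0) := by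
      have h1 : Tendsto (fun x : ℝ => Real.exp (2 * x) - 1) atTop atTop := by
        apply tendsto_atTop_add_const_right
        exact Real.tendsto_exp_atTop.comp (tendsto_const_nhds.pos_mul_atTop two_pos tendsto_id)
      simpa [div_eq_mul_inv] using (tendsto_inv_atTop_zero.comp h1).const_mul 2
    have hlim : Tendsto (fun t => C * (2 / (Real.exp (2 * g t) - 1)) - einf)
        (nhdsWithin Ts (Set.Iio Ts)) (nhds (-einf)) := by
      have := ((hFzero.comp hgtop).const_mul C).sub_const einf
      simpa using this
    apply hlim.congr'
    filter_upwards [self_mem_nhdsWithin, eventually_nhdsWithin_of_eventually_nhds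
      (eventually_gt_nhds (show (0:ℝ) < Ts from hTs))] with t ht ht0
    simp only [Set.mem_Iio] at ht
    exact (hKF t ht0.le ht).symm
  refine ⟨?_, ?_, ?_, hlimit, ?_⟩
  · rw [coth_sub_one_eq hbl, hc3l]
  · rw [hKF 0 le_rfl hTs, show g 0 = bl by simp [hg], ← hc3l, hC,
      div_mul_cancel₀ _ hc3lpos.ne']
    ring
  · -- StrictAntiOn
    intro s hs t ht hst
    simp only [Set.mem_Icc] at hs ht
    rcases lt_or_eq_of_le ht.2 with htlt | hteq
    · rw [hKF s hs.1 (lt_of_lt_of_le hst ht.2), hKF t ht.1 htlt]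
      have := hFanti (g s) (g t) (hgpos s hs.1 (lt_trans hst htlt))
        (hgmono s t hs.1 hst htlt)
      nlinarith
    · rw [hKF s hs.1 (hteq ▸ hst), hK₂ t hteq.ge]
      have h1 : 0 < 2 / (Real.exp (2 * g s) - 1) :=
        div_pos two_pos (hexp1 _ (hgpos s hs.1 (hteq ▸ hst)))
      nlinarith
  · -- continuity
    intro x hx
    simp only [Set.mem_Ici] at hx
    rcases lt_trichotomy x Ts with hlt | heq | hgt
    · -- x < Ts
      have hden : Ts - x ≠ 0 := by intro h; linarith
      have hg' : ContinuousAt g x := by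
        apply ContinuousAt.add _ continuousAt_const
        exact (continuousAt_const.mul continuousAt_id).div
          (continuousAt_const.sub continuousAt_id) hden
      have h1 : ContinuousAt (fun t => Real.exp (2 * g t) - 1) x :=
        (Real.continuous_exp.continuousAt.comp (continuousAt_const.mul hg')).sub
          continuousAt_const
      have h2 : ContinuousAt (fun t => C * (2 / (Real.exp (2 * g t) - 1)) - einf) x :=
        (continuousAt_const.mul (continuousAt_const.div h1
          (ne_of_gt (hexp1 _ (hgpos x hx hlt))))).sub continuousAt_const
      apply h2.continuousWithinAt.congr_of_eventuallyEq
      · filter_upwards [self_mem_nhdsWithin,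
          eventually_nhdsWithin_of_eventually_nhds (eventually_lt_nhds hlt)] with t ht htT
        simp only [Set.mem_Ici] at ht
        exact hKF t ht htT
      · exact hKF x hx hlt
    · -- x = Ts
      subst heq
      have hright : Tendsto K (nhdsWithin x (Set.Ici x)) (nhds (-einf)) := by
        apply Tendsto.congr' _ (tendsto_const_nhds (α := ℝ) (x := -einf))
        filter_upwards [self_mem_nhdsWithin] with t ht
        exact (hK₂ t ht).symm
      have hsup : nhdsWithin x (Set.Ici 0) ≤
          nhdsWithin x (Set.Iio x) ⊔ nhdsWithin x (Set.Ici x) := by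
        rw [← nhdsWithin_union]
        apply nhdsWithin_mono
        intro y _
        rcases lt_or_ge y x with h | h
        · exact Or.inl h
        · exact Or.inr h
      have : Tendsto K (nhdsWithin x (Set.Ici 0)) (nhds (-einf)) :=
        (Tendsto.sup hlimit hright).mono_left hsup
      unfold ContinuousWithinAt
      rwa [hK₂ x le_rfl]
    · -- x > Ts
      apply continuousWithinAt_const.congr_of_eventuallyEq (f := fun _ => -einf)
      · filter_upwards [eventually_nhdsWithin_of_eventually_nhds
          (eventually_gt_nhds hgt)] with t ht
        exact hK₂ t ht.le
      · exact hK₂ x hgt.le
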